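/- Let K be a number field, m ≥ 2 an integer, and x ≥ 1. Then the number of m-tuples (𝔞₁, …, 𝔞_m) of nonzero integral ideals, each of norm at most x, with 𝔞₁ + ⋯ + 𝔞_m = O_K, equals Σ_𝔠 μ(𝔠)·N_K(x/N𝔠)^m, summing over all nonzero ideals 𝔠. -/

import Mathlib

open NumberField Ideal

open Classical in
noncomputable def idealMu (K : Type) [Field K] [NumberField K] (I : Ideal (𝓞 K)) : ℤ :=
  if Squarefree I then (-1) ^ (Multiset.card (UniqueFactorizationMonoid.factors I)) else 0

/-- `NKcount K y` is the number of nonzero integral ideals of `𝓞 K` of norm at most `y`;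
it vanishes for `y < 1`. -/
noncomputable def NKcount (K : Type) [Field K] [NumberField K] (y : ℝ) : ℕ :=
  Set.ncard {I : Ideal (𝓞 K) | I ≠ 0 ∧ (absNorm I : ℝ) ≤ y}

section aux

open UniqueFactorizationMonoid

variable (K : Type) [Field K] [NumberField K]

lemma idealMu_zero : idealMu K 0 = 0 := by
  rw [idealMu, if_neg not_squarefree_zero]

lemma idealMu_prod_primes (S : Finset (Ideal (𝓞 K))) (hS : ∀ p ∈ S, Prime p) :
    idealMu K (∏ p ∈ S, p) = (-1) ^ S.card := by
  classical
  have hne : (∏ p ∈ S, p) ≠ 0 := by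
    rw [Finset.prod_ne_zero_iff]
    exact fun p hp => (hS p hp).ne_zero
  have hnf : normalizedFactors (∏ p ∈ S, p) = S.val := by
    rw [Finset.prod_eq_multiset_prod, Multiset.map_id']
    exact normalizedFactors_prod_of_prime (fun p hp => hS p hp)
  have hsf : Squarefree (∏ p ∈ S, p) := by
    rw [squarefree_iff_nodup_normalizedFactors hne, hnf]
    exact S.nodup
  rw [idealMu, if_pos hsf, factors_eq_normalizedFactors, hnf]
  rfl

open Classical in
lemma mu_divisor_sum (n : Ideal (𝓞 K)) (hn : n ≠ 0) (D : Finset (Ideal (𝓞 K)))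
    (hD : ∀ c, c ∈ D ↔ c ∣ n) :
    ∑ c ∈ D, idealMu K c = if n = ⊤ then 1 else 0 := by
  classical
  set P : Finset (Ideal (𝓞 K)) := (normalizedFactors n).toFinset with hP
  have hsub : ∑ c ∈ D, idealMu K c = ∑ c ∈ D.filter (fun c => Squarefree c), idealMu K c := by
    rw [Finset.sum_filter_of_ne]
    intro c _ hc
    by_contra h
    exact hc (by rw [idealMu, if_neg h])
  rw [hsub]
  have hprimesP : ∀ S : Finset (Ideal (𝓞 K)), S ∈ P.powerset → ∀ p ∈ S, Prime p := by
    intro S hS p hp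
    rw [Finset.mem_powerset] at hS
    have := hS hp
    rw [hP, Multiset.mem_toFinset] at this
    exact prime_of_normalized_factor p this
  have hnfS : ∀ S : Finset (Ideal (𝓞 K)), (∀ p ∈ S, Prime p) →
      normalizedFactors (∏ p ∈ S, p) = S.val := by
    intro S h
    rw [Finset.prod_eq_multiset_prod, Multiset.map_id']
    exact normalizedFactors_prod_of_prime h
  have hbij : ∑ c ∈ D.filter (fun c => Squarefree c), idealMu K c
      = ∑ S ∈ P.powerset, (-1 : ℤ) ^ S.card := by
    refine (Finset.sum_nbij' (fun S => ∏ p ∈ S, p)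
      (fun c => (normalizedFactors c).toFinset) ?_ ?_ ?_ ?_ ?_).symm
    · intro S hS
      have hprimes := hprimesP S hS
      have hne : (∏ p ∈ S, p) ≠ 0 := by
        rw [Finset.prod_ne_zero_iff]
        exact fun p hp => (hprimes p hp).ne_zero
      rw [Finset.mem_filter, hD]
      refine ⟨?_, ?_⟩
      · show (∏ p ∈ S, p) ∣ n
        have hle : S.val ≤ normalizedFactors n := by
          refine le_trans (Finset.val_le_iff.mpr (Finset.mem_powerset.mp hS)) ?_
          rw [hP]
          exact Multiset.dedup_le _
        have := Multiset.prod_dvd_prod_of_le hle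
        rw [Ideal.prod_normalizedFactors_eq_self (by rwa [← Ideal.zero_eq_bot])] at this
        rwa [Finset.prod_eq_multiset_prod, Multiset.map_id']
      · show Squarefree (∏ p ∈ S, p)
        rw [squarefree_iff_nodup_normalizedFactors hne, hnfS S hprimes]
        exact S.nodup
    · intro c hc
      rw [Finset.mem_filter, hD] at hc
      obtain ⟨hdvd, hsf⟩ := hc
      have hcne : c ≠ 0 := fun h => hn (zero_dvd_iff.mp (h ▸ hdvd))
      rw [Finset.mem_powerset, hP]
      intro p hp
      rw [Multiset.mem_toFinset] at hp ⊢
      exact Multiset.mem_of_le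
        ((dvd_iff_normalizedFactors_le_normalizedFactors hcne hn).mp hdvd) hp
    · intro S hS
      show (normalizedFactors (∏ p ∈ S, p)).toFinset = S
      rw [hnfS S (hprimesP S hS)]
      exact S.val_toFinset
    · intro c hc
      rw [Finset.mem_filter, hD] at hc
      obtain ⟨hdvd, hsf⟩ := hc
      have hcne : c ≠ 0 := fun h => hn (zero_dvd_iff.mp (h ▸ hdvd))
      have hnd : (normalizedFactors c).Nodup :=
        (squarefree_iff_nodup_normalizedFactors hcne).mp hsf
      show (∏ p ∈ (normalizedFactors c).toFinset, p) = c
      rw [Finset.prod_eq_multiset_prod, Multiset.map_id', Multiset.toFinset_val,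
        Multiset.Nodup.dedup hnd]
      exact Ideal.prod_normalizedFactors_eq_self (by rwa [← Ideal.zero_eq_bot])
    · intro S hS
      exact (idealMu_prod_primes K S (hprimesP S hS)).symm
  rw [hbij, Finset.sum_powerset_neg_one_pow_card]
  congr 1
  rw [hP, eq_iff_iff]
  simp only [Multiset.toFinset_eq_empty]
  constructor
  · intro h
    have := Ideal.prod_normalizedFactors_eq_self (I := n) (by rwa [← Ideal.zero_eq_bot])
    rw [h] at this
    rw [← this, Multiset.prod_zero, Ideal.one_eq_top]
  · intro h
    rw [h, ← Ideal.one_eq_top, normalizedFactors_one]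

end aux

section main

variable (K : Type) [Field K] [NumberField K]

lemma absNorm_one_le (I : Ideal (𝓞 K)) (hI : I ≠ 0) : 1 ≤ absNorm I :=
  Nat.one_le_iff_ne_zero.mpr (by rwa [Ne, absNorm_eq_zero_iff, ← Ideal.zero_eq_bot])

lemma NKcount_of_lt_one (y : ℝ) (hy : y < 1) : NKcount K y = 0 := by
  rw [NKcount]
  convert Set.ncard_empty (Ideal (𝓞 K))
  ext I
  simp only [Set.mem_setOf_eq, Set.mem_empty_iff_false, iff_false, not_and]
  intro hI h
  have : (1:ℝ) ≤ (absNorm I : ℝ) := by exact_mod_cast absNorm_one_le K I hI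
  linarith

lemma NKcount_div (c : Ideal (𝓞 K)) (hc : c ≠ 0) (x : ℝ) :
    (NKcount K (x / (absNorm c : ℝ)))
      = {J : Ideal (𝓞 K) | J ≠ 0 ∧ (absNorm J : ℝ) ≤ x ∧ c ∣ J}.ncard := by
  have hNc : (0:ℝ) < (absNorm c : ℝ) := by
    exact_mod_cast Nat.lt_of_lt_of_le Nat.zero_lt_one (absNorm_one_le K c hc)
  have himg : (fun I => c * I) '' {I : Ideal (𝓞 K) | I ≠ 0 ∧ (absNorm I : ℝ) ≤ x / (absNorm c : ℝ)}
      = {J : Ideal (𝓞 K) | J ≠ 0 ∧ (absNorm J : ℝ) ≤ x ∧ c ∣ J} := by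
    ext J
    simp only [Set.mem_image, Set.mem_setOf_eq]
    constructor
    · rintro ⟨I, ⟨hI0, hIle⟩, rfl⟩
      refine ⟨mul_ne_zero hc hI0, ?_, Dvd.intro _ rfl⟩
      rw [show absNorm (c*I) = absNorm c * absNorm I from MonoidWithZeroHom.map_mul absNorm c I]
      push_cast
      calc ((absNorm c : ℝ) * (absNorm I : ℝ)) ≤ (absNorm c : ℝ) * (x / (absNorm c : ℝ)) := by
            exact mul_le_mul_of_nonneg_left hIle (le_of_lt hNc)
        _ = x := by field_simp
    · rintro ⟨hJ0, hJle, I, rfl⟩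
      refine ⟨I, ⟨?_, ?_⟩, rfl⟩
      · exact fun h => hJ0 (by rw [h, mul_zero])
      · rw [le_div_iff₀ hNc, mul_comm]
        rw [show absNorm (c*I) = absNorm c * absNorm I from MonoidWithZeroHom.map_mul absNorm c I] at hJle
        push_cast at hJle ⊢
        exact hJle
  rw [NKcount, ← himg,
    Set.ncard_image_of_injective _ (mul_right_injective₀ hc)]

end main


/-- Inclusion–exclusion: the number of `m`-tuples of jointly coprime nonzero ideals, each of
norm at most `x`, equals `∑_𝔠 μ(𝔠) · N_K(x/N𝔠)^m`. -/
theorem coprime_tuple_count_eq_mu_sum (K : Type) [Field K] [NumberField K] (m : ℕ)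
    (hm : 2 ≤ m) (x : ℝ) (hx : 1 ≤ x) :
    (Set.ncard {f : Fin m → Ideal (𝓞 K) |
        (∀ i, f i ≠ 0 ∧ (absNorm (f i) : ℝ) ≤ x) ∧ (⨆ i, f i) = ⊤} : ℝ)
      = ∑' c : {I : Ideal (𝓞 K) // I ≠ 0},
          (idealMu K c.1 : ℝ) * (NKcount K (x / (absNorm c.1 : ℝ)) : ℝ) ^ m := by
  classical
  set F : Ideal (𝓞 K) → ℝ :=
    fun c => (idealMu K c : ℝ) * (NKcount K (x / (absNorm c : ℝ)) : ℝ) ^ m with hF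
  have hTfin : {I : Ideal (𝓞 K) | I ≠ 0 ∧ (absNorm I : ℝ) ≤ x}.Finite := by
    refine (Ideal.finite_setOf_absNorm_le ⌊x⌋₊).subset ?_
    intro I hI
    exact Nat.le_floor hI.2
  set Tf : Finset (Ideal (𝓞 K)) := hTfin.toFinset with hTf
  have hTf_mem : ∀ I, I ∈ Tf ↔ I ≠ 0 ∧ (absNorm I : ℝ) ≤ x := by
    intro I; rw [hTf, Set.Finite.mem_toFinset]; rfl
  -- reduce the tsum to a finite sum
  have hm0 : m ≠ 0 := by omega
  have hstep1 : ∑' c : {I : Ideal (𝓞 K) // I ≠ 0}, F c.1 = ∑ c ∈ Tf, F c := by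
    have h1 : ∑' c : {I : Ideal (𝓞 K) // I ≠ 0}, F c.1
        = ∑' c : Ideal (𝓞 K), Set.indicator {I : Ideal (𝓞 K) | I ≠ 0} F c :=
      tsum_subtype _ F
    have hvan : ∀ c ∉ Tf, Set.indicator {I : Ideal (𝓞 K) | I ≠ 0} F c = 0 := by
      intro c hc
      by_cases hc0 : c = 0
      · rw [Set.indicator_of_notMem (by simp [hc0])]
      · rw [Set.indicator_of_mem (show c ∈ {I : Ideal (𝓞 K) | I ≠ 0} from hc0)]
        rw [hTf_mem] at hc
        push_neg at hc
        have hlt : (absNorm c : ℝ) > x := hc hc0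
        have hNc : (1:ℝ) ≤ (absNorm c : ℝ) := by exact_mod_cast absNorm_one_le K c hc0
        have : x / (absNorm c : ℝ) < 1 := by
          rw [div_lt_one (by linarith)]
          linarith
        rw [hF]
        simp [NKcount_of_lt_one K _ this, hm0]
    rw [h1, tsum_eq_sum hvan]
    refine Finset.sum_congr rfl ?_
    intro c hc
    exact Set.indicator_of_mem (show c ∈ {I : Ideal (𝓞 K) | I ≠ 0} from ((hTf_mem c).mp hc).1) F
  set G : Finset (Fin m → Ideal (𝓞 K)) := Fintype.piFinset (fun _ => Tf) with hG
  have hG_mem : ∀ g : Fin m → Ideal (𝓞 K), g ∈ G ↔ ∀ i, g i ∈ Tf := by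
    intro g; rw [hG, Fintype.mem_piFinset]
  have i0 : Fin m := ⟨0, by omega⟩
  have hdvd_iff : ∀ (g : Fin m → Ideal (𝓞 K)) (c : Ideal (𝓞 K)),
      ((∀ i, c ∣ g i) ↔ c ∣ ⨆ i, g i) := by
    intro g c
    simp only [Ideal.dvd_iff_le, iSup_le_iff]
  have hsup : ∀ g : Fin m → Ideal (𝓞 K), (∀ i, g i ∈ Tf) →
      ((⨆ i, g i) ≠ 0 ∧ ∀ c, c ∣ (⨆ i, g i) → c ∈ Tf) := by
    intro g hg
    have hgi := fun i => (hTf_mem _).mp (hg i)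
    have hne : (⨆ i, g i) ≠ 0 := by
      intro h
      have hle0 : g i0 ≤ ⨆ i, g i := le_iSup g i0
      rw [h, Ideal.zero_eq_bot, le_bot_iff, ← Ideal.zero_eq_bot] at hle0
      exact (hgi i0).1 hle0
    refine ⟨hne, ?_⟩
    intro c hc
    rw [hTf_mem]
    have hc0 : c ≠ 0 := fun h => hne (zero_dvd_iff.mp (h ▸ hc))
    have h2 : c ∣ g i0 := hc.trans (Ideal.dvd_iff_le.mpr (le_iSup g i0))
    obtain ⟨d, hd⟩ := h2
    have hdvdN : absNorm c ∣ absNorm (g i0) :=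
      ⟨absNorm d, by rw [hd]; exact MonoidWithZeroHom.map_mul absNorm c d⟩
    have hposN : 0 < absNorm (g i0) := Nat.lt_of_lt_of_le Nat.zero_lt_one
      (absNorm_one_le K _ (hgi i0).1)
    have hleN : absNorm c ≤ absNorm (g i0) := Nat.le_of_dvd hposN hdvdN
    refine ⟨hc0, le_trans ?_ (hgi i0).2⟩
    exact_mod_cast hleN
  -- step 2: rewrite F c as a sum over G
  have hstep2 : ∀ c ∈ Tf, F c
      = ∑ g ∈ G, (idealMu K c : ℝ) * (if c ∣ ⨆ i, g i then 1 else 0) := by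
    intro c hc
    obtain ⟨hc0, hcx⟩ := (hTf_mem c).mp hc
    have hcount : (NKcount K (x / (absNorm c : ℝ)))
        = (Tf.filter (fun J => c ∣ J)).card := by
      rw [NKcount_div K c hc0 x]
      rw [show {J : Ideal (𝓞 K) | J ≠ 0 ∧ (absNorm J : ℝ) ≤ x ∧ c ∣ J}
          = ↑(Tf.filter (fun J => c ∣ J)) by
        ext J
        simp only [Finset.coe_filter, Set.mem_setOf_eq, hTf_mem]
        tauto]
      exact Set.ncard_coe_finset _
    have hpow : ((Tf.filter (fun J => c ∣ J)).card : ℝ) ^ m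
        = ((G.filter (fun g => ∀ i, c ∣ g i)).card : ℝ) := by
      have hpi : Fintype.piFinset (fun _ : Fin m => Tf.filter (fun J => c ∣ J))
          = G.filter (fun g => ∀ i, c ∣ g i) := by
        ext g
        simp only [Fintype.mem_piFinset, Finset.mem_filter, hG_mem, forall_and]
      rw [← hpi, Fintype.card_piFinset]
      simp [Finset.prod_const]
    have hcard : ((G.filter (fun g => ∀ i, c ∣ g i)).card : ℝ)
        = ∑ g ∈ G, (if c ∣ ⨆ i, g i then (1:ℝ) else 0) := by
      rw [← Finset.sum_boole]
      refine Finset.sum_congr rfl ?_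
      intro g _
      exact if_congr (hdvd_iff g c) rfl rfl
    rw [hF]
    simp only
    rw [hcount, hpow, hcard, Finset.mul_sum]
  -- step 3 + 4: swap sums and apply the Möbius identity
  have hstep3 : ∑ c ∈ Tf, F c
      = ∑ g ∈ G, (if (⨆ i, g i) = ⊤ then (1:ℝ) else 0) := by
    rw [Finset.sum_congr rfl hstep2, Finset.sum_comm]
    refine Finset.sum_congr rfl ?_
    intro g hg
    obtain ⟨hne, hdiv⟩ := hsup g ((hG_mem g).mp hg)
    have hfilter : ∑ c ∈ Tf, (idealMu K c : ℝ) * (if c ∣ ⨆ i, g i then 1 else 0)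
        = ∑ c ∈ Tf.filter (fun c => c ∣ ⨆ i, g i), (idealMu K c : ℝ) := by
      rw [Finset.sum_filter]
      refine Finset.sum_congr rfl ?_
      intro c _
      by_cases h : c ∣ ⨆ i, g i <;> simp [h]
    rw [hfilter]
    have hD : ∀ c, c ∈ Tf.filter (fun c => c ∣ ⨆ i, g i) ↔ c ∣ ⨆ i, g i := by
      intro c
      rw [Finset.mem_filter]
      exact ⟨fun h => h.2, fun h => ⟨hdiv c h, h⟩⟩
    have := mu_divisor_sum K (⨆ i, g i) hne _ hD
    have hcast : ∑ c ∈ Tf.filter (fun c => c ∣ ⨆ i, g i), (idealMu K c : ℝ)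
        = ((∑ c ∈ Tf.filter (fun c => c ∣ ⨆ i, g i), idealMu K c : ℤ) : ℝ) := by
      push_cast
      rfl
    rw [hcast, this]
    by_cases h : (⨆ i, g i) = ⊤ <;> simp [h]
  -- LHS as a finset card
  have hLHS : {f : Fin m → Ideal (𝓞 K) |
        (∀ i, f i ≠ 0 ∧ (absNorm (f i) : ℝ) ≤ x) ∧ (⨆ i, f i) = ⊤}
      = ↑(G.filter (fun g => (⨆ i, g i) = ⊤)) := by
    ext g
    simp only [Finset.coe_filter, Set.mem_setOf_eq, hG_mem, hTf_mem]
  rw [hLHS, Set.ncard_coe_finset, hstep1, hstep3, Finset.sum_boole]
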